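/- Let n ≥ 2 and let ε : {1,…,n−1} → {1,−1} be arbitrary. Let L be the n×n integer matrix with L_{11} = L_{nn} = 2, L_{ii} = 3 for 1 < i < n, L_{i,i+1} = L_{i+1,i} = ε(i) for 1 ≤ i ≤ n−1, and all other entries 0. Then det L = fib(2n), where fib denotes the Fibonacci sequence (fib 0 = 0, fib 1 = 1). -/
import Mathlib


open Matrix


def triM (n : ℕ) (a b c : ℕ → ℤ) : Matrix (Fin n) (Fin n) ℤ :=
  Matrix.of fun i j => if (i : ℕ) = (j : ℕ) then a i
    else if (i : ℕ) + 1 = (j : ℕ) then b i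
    else if (j : ℕ) + 1 = (i : ℕ) then c j
    else 0

def tri : ℕ → (ℕ → ℤ) → (ℕ → ℤ) → (ℕ → ℤ) → ℤ
  | 0, _, _, _ => 1
  | 1, a, _, _ => a 0
  | (n+2), a, b, c =>
      a 0 * tri (n+1) (fun i => a (i+1)) (fun i => b (i+1)) (fun i => c (i+1))
        - b 0 * c 0 * tri n (fun i => a (i+2)) (fun i => b (i+2)) (fun i => c (i+2))

lemma det_triM : ∀ (n : ℕ) (a b c : ℕ → ℤ), (triM n a b c).det = tri n a b c := by
  intro n
  induction n using Nat.strong_induction_on with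
  | _ n ih =>
    match n with
    | 0 => intro a b c; simp [triM, tri, Matrix.det_fin_zero]
    | 1 => intro a b c; simp [triM, tri, Matrix.det_fin_one]
    | (m+2) =>
      intro a b c
      set M := triM (m+2) a b c with hM
      rw [Matrix.det_succ_column_zero, Fin.sum_univ_succ, Fin.sum_univ_succ]
      have h0 : M 0 0 = a 0 := by simp [hM, triM]
      have h1 : M (0 : Fin (m+1)).succ 0 = c 0 := by simp [hM, triM, Fin.ext_iff]
      have hz : ∀ i : Fin m, M i.succ.succ 0 = 0 := by
        intro i; simp [hM, triM, Fin.ext_iff]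
      have hS0 : M.submatrix (Fin.succAbove 0) Fin.succ
          = triM (m+1) (fun i => a (i+1)) (fun i => b (i+1)) (fun i => c (i+1)) := by
        ext i j
        simp [hM, triM, Fin.succAbove, Fin.lt_def]
      have hS1 : (M.submatrix (Fin.succAbove (0 : Fin (m+1)).succ) Fin.succ).det
          = b 0 * tri m (fun i => a (i+2)) (fun i => b (i+2)) (fun i => c (i+2)) := by
        set N := M.submatrix (Fin.succAbove (0 : Fin (m+1)).succ) Fin.succ with hN
        rw [Matrix.det_succ_row_zero, Fin.sum_univ_succ]
        have hN00 : N 0 0 = b 0 := by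
          simp [hN, hM, triM, Fin.succAbove, Fin.lt_def]
        have hNz : ∀ j : Fin m, N 0 j.succ = 0 := by
          intro j; simp [hN, hM, triM, Fin.succAbove, Fin.lt_def, Fin.ext_iff]
        have hNs : N.submatrix Fin.succ (Fin.succAbove 0)
            = triM m (fun i => a (i+2)) (fun i => b (i+2)) (fun i => c (i+2)) := by
          ext i j
          simp [hN, hM, triM, Fin.succAbove, Fin.lt_def]
        simp only [hNz, mul_zero, zero_mul, Finset.sum_const_zero, add_zero,
          hN00, hNs, ih m (by omega)]
        simp
      simp only [hz, mul_zero, zero_mul, Finset.sum_const_zero, add_zero,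
        h0, h1, hS0, hS1, ih (m+1) (by omega)]
      rw [tri]
      have e1 : ((0 : Fin (m+2)) : ℕ) = 0 := rfl
      have e2 : ((Fin.succ 0 : Fin (m+2)) : ℕ) = 1 := rfl
      rw [e1, e2]
      ring

lemma tri_fib : ∀ (m : ℕ) (a b c : ℕ → ℤ),
    (∀ i, i < m → a i = if i = m - 1 then 2 else 3) →
    (∀ i, i + 1 < m → b i * c i = 1) →
    tri m a b c = (Nat.fib (2*m+1) : ℤ) := by
  intro m
  induction m using Nat.strong_induction_on with
  | _ m ih =>
    match m with
    | 0 => intro a b c _ _; simp [tri]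
    | 1 =>
      intro a b c ha _
      rw [tri, ha 0 (by omega)]
      norm_num
    | (m+2) =>
      intro a b c ha hbc
      rw [tri]
      rw [ih (m+1) (by omega) _ _ _
          (fun i hi => by rw [ha (i+1) (by omega)]; split_ifs <;> omega)
          (fun i hi => hbc (i+1) (by omega))]
      rw [ih m (by omega) _ _ _
          (fun i hi => by rw [ha (i+2) (by omega)]; split_ifs <;> omega)
          (fun i hi => hbc (i+2) (by omega))]
      rw [ha 0 (by omega), hbc 0 (by omega)]
      have h1 : Nat.fib (2*(m+2)+1) = Nat.fib (2*m+3) + Nat.fib (2*m+4) := by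
        rw [show 2*(m+2)+1 = 2*m+3+2 by ring, Nat.fib_add_two,
          show 2*m+3+1 = 2*m+4 by ring]
      have h2 : Nat.fib (2*m+4) = Nat.fib (2*m+2) + Nat.fib (2*m+3) := by
        rw [show 2*m+4 = 2*m+2+2 by ring, Nat.fib_add_two, show 2*m+2+1 = 2*m+3 by ring]
      have h3 : Nat.fib (2*m+3) = Nat.fib (2*m+1) + Nat.fib (2*m+2) := by
        rw [show 2*m+3 = 2*m+1+2 by ring, Nat.fib_add_two, show 2*m+1+1 = 2*m+2 by ring]
      have h4 : 2*(m+1)+1 = 2*m+3 := by omega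
      rw [h4, if_neg (by omega : ¬(0 = m+2-1))]
      push_cast [h1, h2, h3]
      ring

/-- Lemma `OrderFan`: the reduced signed Laplacian `L` of an arbitrary signed fan graph
`(F_n)_φ` (diagonal `2, 3, …, 3, 2`, off-diagonal signs `ε(i) ∈ {±1}` on the
tridiagonal) has determinant `fib(2n)`. -/
theorem stmt12 (n : ℕ) (hn : 2 ≤ n) (ε : ℕ → ℤ)
    (hε : ∀ i, 1 ≤ i → i ≤ n - 1 → ε i = 1 ∨ ε i = -1)
    (L : Matrix (Fin n) (Fin n) ℤ)
    (hL : ∀ i j : Fin n, L i j =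
      if i = j then (if (i : ℕ) = 0 ∨ (i : ℕ) = n - 1 then 2 else 3)
      else if (i : ℕ) + 1 = (j : ℕ) then ε ((i : ℕ) + 1)
      else if (j : ℕ) + 1 = (i : ℕ) then ε ((j : ℕ) + 1)
      else 0) :
    L.det = (Nat.fib (2 * n) : ℤ) := by
  obtain ⟨m, rfl⟩ : ∃ m, n = m + 2 := ⟨n - 2, by omega⟩
  set a : ℕ → ℤ := fun i => if i = 0 ∨ i = m + 1 then 2 else 3 with hadef
  set b : ℕ → ℤ := fun i => ε (i + 1) with hbdef
  have hLM : L = triM (m+2) a b b := by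
    ext i j
    rw [hL i j]
    simp only [triM, Matrix.of_apply, hadef, hbdef, Fin.ext_iff]
    have : (i : ℕ) = m + 2 - 1 ↔ (i : ℕ) = m + 1 := by omega
    split_ifs <;> omega
  have hsq : ∀ i, 1 ≤ i → i ≤ m + 1 → ε i * ε i = 1 := by
    intro i h1 h2
    rcases hε i h1 (by omega) with h | h <;> rw [h] <;> ring
  rw [hLM, det_triM, tri]
  rw [tri_fib (m+1) _ _ _
      (fun i hi => by
        simp only [hadef]
        exact if_congr (by omega) rfl rfl)
      (fun i hi => by simp only [hbdef]; exact hsq (i+2) (by omega) (by omega))]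
  rw [tri_fib m _ _ _
      (fun i hi => by
        simp only [hadef]
        exact if_congr (by omega) rfl rfl)
      (fun i hi => by simp only [hbdef]; exact hsq (i+3) (by omega) (by omega))]
  have ha0 : a 0 = 2 := by simp [hadef]
  have hb0 : b 0 * b 0 = 1 := hsq 1 (by omega) (by omega)
  rw [ha0, hb0]
  have h1 : Nat.fib (2*(m+2)) = Nat.fib (2*m+2) + Nat.fib (2*m+3) := by
    rw [show 2*(m+2) = 2*m+2+2 by ring, Nat.fib_add_two, show 2*m+2+1 = 2*m+3 by ring]
  have h3 : Nat.fib (2*m+3) = Nat.fib (2*m+1) + Nat.fib (2*m+2) := by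
    rw [show 2*m+3 = 2*m+1+2 by ring, Nat.fib_add_two, show 2*m+1+1 = 2*m+2 by ring]
  have h4 : 2*(m+1)+1 = 2*m+3 := by omega
  rw [h4]
  push_cast [h1, h3]
  ring
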